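/- Abstraction soundness for unbounded reachability: let (S, P) be a finite DTMC, h : S → Ŝ a surjective abstraction function, and B ⊆ S an h-saturated target set with abstract target B̂ = h(B). Then for every s ∈ S, ⨆ₙ minreach n (h s) ≤ Preach s ≤ ⨆ₙ maxreach n (h s), where Preach is the reachability probability of B in the concrete DTMC and minreach, maxreach are the value-iteration sequences of the induced abstract MDP with target B̂. -/
import Mathlib


open scoped Classical

/-- Concretization of an abstract state: `γ(t) = h⁻¹({t})`, as a finset. -/
noncomputable def gammaSet {S T : Type*} [Fintype S] (h : S → T) (t : T) : Finset S :=
  Finset.univ.filter fun s => h s = t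

/-- The concretization of every abstract state is nonempty when `h` is surjective. -/
theorem gammaSet_nonempty {S T : Type*} [Fintype S] (h : S → T)
    (hsurj : Function.Surjective h) (t : T) : (gammaSet h t).Nonempty := by
  obtain ⟨s, hs⟩ := hsurj t
  exact ⟨s, by simp [gammaSet, hs]⟩

/-- Abstract transition function of the induced abstract MDP:
`P̂ ŝ α ŝ' = ∑_{s' ∈ γ(ŝ')} P α s'` (independent of the abstract source state). -/
noncomputable def absP {S T : Type*} [Fintype S] (P : S → S → ℝ) (h : S → T)
    (α : S) (t' : T) : ℝ :=
  ∑ s' ∈ gammaSet h t', P α s'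

/-- Minimum value iteration of the induced abstract MDP (state space `T`, actions
`S`, enabled actions `Act(t) = γ(t)`) for an abstract target set `Bh`. -/
noncomputable def absMinReach {S T : Type*} [Fintype S] [Fintype T]
    (P : S → S → ℝ) (h : S → T) (hsurj : Function.Surjective h) (Bh : Set T) :
    ℕ → T → ℝ
  | 0, t => if t ∈ Bh then 1 else 0
  | n + 1, t =>
      if t ∈ Bh then 1
      else (gammaSet h t).inf' (gammaSet_nonempty h hsurj t) fun α =>
        ∑ t' : T, absP P h α t' * absMinReach P h hsurj Bh n t'

/-- Maximum value iteration of the induced abstract MDP for target `Bh`. -/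
noncomputable def absMaxReach {S T : Type*} [Fintype S] [Fintype T]
    (P : S → S → ℝ) (h : S → T) (hsurj : Function.Surjective h) (Bh : Set T) :
    ℕ → T → ℝ
  | 0, t => if t ∈ Bh then 1 else 0
  | n + 1, t =>
      if t ∈ Bh then 1
      else (gammaSet h t).sup' (gammaSet_nonempty h hsurj t) fun α =>
        ∑ t' : T, absP P h α t' * absMaxReach P h hsurj Bh n t'

/-- n-step reachability values of a target set `B` in the concrete DTMC. -/
noncomputable def reachN {S : Type*} [Fintype S] (P : S → S → ℝ) (B : Set S) :
    ℕ → S → ℝ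
  | 0, s => if s ∈ B then 1 else 0
  | n + 1, s => if s ∈ B then 1 else ∑ s' : S, P s s' * reachN P B n s'

theorem absP_sum_mul {S T : Type*} [Fintype S] [Fintype T] (P : S → S → ℝ) (h : S → T)
    (α : S) (g : T → ℝ) :
    ∑ t' : T, absP P h α t' * g t' = ∑ s' : S, P α s' * g (h s') := by
  have : ∀ t' : T, absP P h α t' * g t' = ∑ s' ∈ gammaSet h t', P α s' * g (h s') := by
    intro t'
    rw [absP, Finset.sum_mul]
    refine Finset.sum_congr rfl fun s' hs' => ?_
    simp only [gammaSet, Finset.mem_filter] at hs'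
    rw [hs'.2]
  simp_rw [this]
  exact Finset.sum_fiberwise _ _ _

theorem reachN_le_one {S : Type*} [Fintype S] (P : S → S → ℝ)
    (hP : ∀ s s', 0 ≤ P s s') (hsum : ∀ s, ∑ s' : S, P s s' = 1) (B : Set S) :
    ∀ n s, reachN P B n s ≤ 1 := by
  intro n
  induction n with
  | zero => intro s; simp [reachN]; split <;> norm_num
  | succ n ih =>
    intro s
    simp only [reachN]
    split
    · exact le_refl 1
    · calc ∑ s' : S, P s s' * reachN P B n s' ≤ ∑ s' : S, P s s' * 1 :=
            Finset.sum_le_sum fun s' _ => mul_le_mul_of_nonneg_left (ih s') (hP s s')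
        _ = 1 := by simp [hsum s]

theorem absMaxReach_le_one {S T : Type*} [Fintype S] [Fintype T]
    (P : S → S → ℝ) (hP : ∀ s s', 0 ≤ P s s') (hsum : ∀ s, ∑ s' : S, P s s' = 1)
    (h : S → T) (hsurj : Function.Surjective h) (Bh : Set T) :
    ∀ n t, absMaxReach P h hsurj Bh n t ≤ 1 := by
  intro n
  induction n with
  | zero => intro t; simp [absMaxReach]; split <;> norm_num
  | succ n ih =>
    intro t
    simp only [absMaxReach]
    split
    · exact le_refl 1
    · rw [Finset.sup'_le_iff]
      intro α _
      rw [absP_sum_mul]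
      calc ∑ s' : S, P α s' * absMaxReach P h hsurj Bh n (h s')
          ≤ ∑ s' : S, P α s' * 1 :=
            Finset.sum_le_sum fun s' _ => mul_le_mul_of_nonneg_left (ih (h s')) (hP α s')
        _ = 1 := by simp [hsum α]

theorem abstraction_bounds_pointwise {S T : Type*} [Fintype S] [Fintype T]
    (P : S → S → ℝ) (hP : ∀ s s', 0 ≤ P s s')
    (h : S → T) (hsurj : Function.Surjective h)
    (B : Set S) (hsat : B = h ⁻¹' (h '' B)) :
    ∀ n (s : S), absMinReach P h hsurj (h '' B) n (h s) ≤ reachN P B n s ∧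
      reachN P B n s ≤ absMaxReach P h hsurj (h '' B) n (h s) := by
  have hmem : ∀ s : S, h s ∈ h '' B ↔ s ∈ B := by
    intro s
    constructor
    · intro hs; rw [hsat]; exact hs
    · exact fun hs => ⟨s, hs, rfl⟩
  have hself : ∀ s : S, s ∈ gammaSet h (h s) := by
    intro s; simp [gammaSet]
  intro n
  induction n with
  | zero =>
    intro s
    simp only [absMinReach, absMaxReach, reachN, hmem s]
    constructor <;> exact le_refl _
  | succ n ih =>
    intro s
    simp only [absMinReach, absMaxReach, reachN, hmem s]
    by_cases hs : s ∈ B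
    · simp [hs]
    · simp only [hs, if_false]
      constructor
      · refine le_trans (Finset.inf'_le _ (hself s)) ?_
        rw [absP_sum_mul]
        exact Finset.sum_le_sum fun s' _ =>
          mul_le_mul_of_nonneg_left (ih s').1 (hP s s')
      · refine le_trans ?_ (Finset.le_sup' _ (hself s))
        rw [absP_sum_mul]
        exact Finset.sum_le_sum fun s' _ =>
          mul_le_mul_of_nonneg_left (ih s').2 (hP s s')

/-- Abstraction soundness for unbounded reachability: let (S, P) be a
finite DTMC, h : S → Ŝ a surjective abstraction function, and B ⊆ S an h-saturated
target set with abstract target B̂ = h(B). Then for every concrete state s,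
`⨆ₙ minreach n (h s) ≤ Preach s ≤ ⨆ₙ maxreach n (h s)`, where
`Preach s = ⨆ₙ reach n s` is the reachability probability of B in the concrete
DTMC. -/
theorem abstraction_sound_unbounded_reach {S T : Type*}
    [Fintype S] [Nonempty S] [Fintype T]
    (P : S → S → ℝ)
    (hP : ∀ s s' : S, 0 ≤ P s s')
    (hsum : ∀ s : S, ∑ s' : S, P s s' = 1)
    (h : S → T) (hsurj : Function.Surjective h)
    (B : Set S) (hsat : B = h ⁻¹' (h '' B)) :
    ∀ s : S,
      (⨆ n : ℕ, absMinReach P h hsurj (h '' B) n (h s)) ≤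
          (⨆ n : ℕ, reachN P B n s) ∧
      (⨆ n : ℕ, reachN P B n s) ≤
          ⨆ n : ℕ, absMaxReach P h hsurj (h '' B) n (h s) := by
  intro s
  have hpt := abstraction_bounds_pointwise P hP h hsurj B hsat
  have hbdd1 : BddAbove (Set.range fun n => reachN P B n s) :=
    ⟨1, by rintro x ⟨n, rfl⟩; exact reachN_le_one P hP hsum B n s⟩
  have hbdd2 : BddAbove (Set.range fun n => absMaxReach P h hsurj (h '' B) n (h s)) :=
    ⟨1, by rintro x ⟨n, rfl⟩; exact absMaxReach_le_one P hP hsum h hsurj _ n _⟩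
  exact ⟨ciSup_mono hbdd1 fun n => (hpt n s).1, ciSup_mono hbdd2 fun n => (hpt n s).2⟩
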